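/- If α > 0 is such that f_s(·,α) equioscillates, i.e., there is M > 0 with max_{u∈[−1,1]} f_s(u,α) = M and min_{u∈[−1,1]} f_s(u,α) = −M, then α lies in the interval [1/2, 1/(2(1−a²))]. -/

import Mathlib

noncomputable section

open Real Set

/-- A vector in Euclidean 3-space. -/
def v3 (x y z : ℝ) : EuclideanSpace ℝ (Fin 3) := WithLp.toLp 2 ![x, y, z]

/-- Quadratic Bernstein polynomials (parametrized on `[-1,1]`). -/
def bern (i : Fin 3) (u : ℝ) : ℝ :=
  (Nat.choose 2 (i : ℕ)) * ((1 + u) / 2) ^ (i : ℕ) * ((1 - u) / 2) ^ (2 - (i : ℕ))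

/-- Control points `ctrl a α β i j = b i j` of the tensor product quadratic Bézier patch:
`b₀₀ = (-a,-a,√(1-2a²))`, `b₂₀ = (a,-a,√(1-2a²))`, `b₀₂ = (-a,a,√(1-2a²))`,
`b₂₂ = (a,a,√(1-2a²))`, `b₁₀ = α(b₀₀+b₂₀)`, `b₀₁ = α(b₀₀+b₀₂)`, `b₂₁ = α(b₂₀+b₂₂)`,
`b₁₂ = α(b₀₂+b₂₂)`, `b₁₁ = β(0,0,1)`. The first index is the `u`-index. -/
def ctrl (a α β : ℝ) : Fin 3 → Fin 3 → EuclideanSpace ℝ (Fin 3) :=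
  ![![v3 (-a) (-a) (Real.sqrt (1 - 2*a^2)),
     α • (v3 (-a) (-a) (Real.sqrt (1 - 2*a^2)) + v3 (-a) a (Real.sqrt (1 - 2*a^2))),
     v3 (-a) a (Real.sqrt (1 - 2*a^2))],
    ![α • (v3 (-a) (-a) (Real.sqrt (1 - 2*a^2)) + v3 a (-a) (Real.sqrt (1 - 2*a^2))),
     β • v3 0 0 1,
     α • (v3 (-a) a (Real.sqrt (1 - 2*a^2)) + v3 a a (Real.sqrt (1 - 2*a^2)))],
    ![v3 a (-a) (Real.sqrt (1 - 2*a^2)),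
     α • (v3 a (-a) (Real.sqrt (1 - 2*a^2)) + v3 a a (Real.sqrt (1 - 2*a^2))),
     v3 a a (Real.sqrt (1 - 2*a^2))]]

/-- The tensor product quadratic Bézier patch
`p(u,v) = ∑ᵢ ∑ⱼ Bᵢ²(u) Bⱼ²(v) bᵢⱼ`. -/
def bez (a α β u v : ℝ) : EuclideanSpace ℝ (Fin 3) :=
  ∑ i : Fin 3, ∑ j : Fin 3, (bern i u * bern j v) • ctrl a α β i j

/-- The simplified radial error `f(u,v,α,β) = ‖p(u,v)‖² - 1`. -/
def f (a α β u v : ℝ) : ℝ := ‖bez a α β u v‖ ^ 2 - 1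

/-- `f_s(u,α) = f(u,-1,α,β)`; this does not depend on `β` (the control point `b₁₁`
does not contribute on the side `v = -1`), so we take `β = 0`. -/
def fs (a α u : ℝ) : ℝ := f a α 0 u (-1)

/-- `f_d(u,α,β) = f(u,u,α,β)`, the error along the diagonal. -/
def fd (a α β u : ℝ) : ℝ := f a α β u u

lemma v3_add (x y z x' y' z' : ℝ) : v3 x y z + v3 x' y' z' = v3 (x+x') (y+y') (z+z') := by
  ext k; fin_cases k <;> rfl

lemma v3_smul (r x y z : ℝ) : r • v3 x y z = v3 (r*x) (r*y) (r*z) := by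
  ext k; fin_cases k <;> rfl

lemma norm_v3_sq (x y z : ℝ) : ‖v3 x y z‖^2 = x^2+y^2+z^2 := by
  rw [EuclideanSpace.norm_eq, Real.sq_sqrt (by positivity)]
  simp [v3, Fin.sum_univ_three, sq_abs]

lemma bern_neg_one_0 : bern 0 (-1) = 1 := by norm_num [bern]
lemma bern_neg_one_1 : bern 1 (-1) = 0 := by norm_num [bern]
lemma bern_neg_one_2 : bern 2 (-1) = 0 := by norm_num [bern]

lemma bez_side (a α u : ℝ) :
    bez a α 0 u (-1) =
      v3 (a*((bern 2 u - bern 0 u) + 0*(bern 1 u)))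
         (-(a*((bern 0 u + bern 2 u) + 2*α*(bern 1 u))))
         (Real.sqrt (1 - 2*a^2) * ((bern 0 u + bern 2 u) + 2*α*(bern 1 u))) := by
  simp only [bez, Fin.sum_univ_three, bern_neg_one_0, bern_neg_one_1, bern_neg_one_2,
    mul_one, mul_zero, zero_smul, add_zero, ctrl]
  simp only [Matrix.cons_val_zero, Matrix.cons_val_one, Matrix.head_cons, Matrix.cons_val_two,
    Matrix.tail_cons]
  rw [v3_add, v3_smul, v3_smul, v3_smul, v3_smul, v3_add, v3_add]
  congr 1 <;> ring

lemma fs_eq (a α u : ℝ) (h2a : 2*a^2 ≤ 1) :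
    fs a α u = a^2*u^2 + (1-a^2)*((1+u^2)/2 + α*(1-u^2))^2 - 1 := by
  have h1 : bern 0 u + bern 2 u = (1+u^2)/2 := by norm_num [bern]; ring
  have h2 : bern 1 u = (1-u^2)/2 := by norm_num [bern]; ring
  have h3 : bern 2 u - bern 0 u = u := by norm_num [bern]; ring
  have hs : Real.sqrt (1 - 2*a^2) ^ 2 = 1 - 2*a^2 :=
    Real.sq_sqrt (by linarith : (0:ℝ) ≤ 1 - 2*a^2)
  rw [fs, f, bez_side, norm_v3_sq, h1, h2, h3]
  linear_combination (((1+u^2)/2 + 2*α*((1-u^2)/2))^2) * hs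

/-- If `α > 0` is such that `f_s(·,α)` equioscillates, i.e. there is `M > 0` with
`max_{[-1,1]} f_s(·,α) = M` and `min_{[-1,1]} f_s(·,α) = -M`, then
`α ∈ [1/2, 1/(2(1-a²))]`. -/
theorem equioscillation_interval (a : ℝ) (ha : 0 < a) (ha' : a ≤ Real.sqrt 2 / 2)
    (α : ℝ) (hα : 0 < α)
    (h : ∃ M : ℝ, 0 < M ∧
      sSup ((fun u => fs a α u) '' Set.Icc (-1:ℝ) 1) = M ∧
      sInf ((fun u => fs a α u) '' Set.Icc (-1:ℝ) 1) = -M) :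
    α ∈ Set.Icc (1/2 : ℝ) (1/(2*(1 - a^2))) := by
  obtain ⟨M, hM, hsup, hinf⟩ := h
  have hs2 : (Real.sqrt 2 / 2)^2 = 1/2 := by
    rw [div_pow, Real.sq_sqrt (by norm_num : (0:ℝ) ≤ 2)]; norm_num
  have ha2 : a^2 ≤ 1/2 := by nlinarith [Real.sqrt_nonneg 2]
  have hD : (0:ℝ) < 1 - a^2 := by nlinarith
  have h2a : 2*a^2 ≤ 1 := by linarith
  have hne : ((fun u => fs a α u) '' Set.Icc (-1:ℝ) 1).Nonempty :=
    ⟨fs a α 0, ⟨0, by norm_num, rfl⟩⟩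
  have decomp : ∀ u : ℝ, fs a α u
      = (1-u^2) * (2*(1-a^2)*α - 1) + (1-a^2)*(1-u^2)^2*(α-1/2)^2 := by
    intro u; rw [fs_eq a α u h2a]; ring
  constructor
  · -- lower bound 1/2 ≤ α
    by_contra hlt
    push_neg at hlt
    have hub : ∀ y ∈ (fun u => fs a α u) '' Set.Icc (-1:ℝ) 1, y ≤ 0 := by
      rintro y ⟨u, ⟨hu1, hu2⟩, rfl⟩
      have hw0 : (0:ℝ) ≤ 1 - u^2 := by nlinarith
      have hw1 : 1 - u^2 ≤ 1 := by nlinarith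
      show fs a α u ≤ 0
      rw [decomp]
      nlinarith [mul_nonneg hw0 (sq_nonneg (α-1/2)), sq_nonneg (α-1/2),
        mul_nonneg (mul_nonneg hw0 (sub_nonneg.2 hw1)) (sq_nonneg (α-1/2)),
        mul_nonneg hw0 (mul_nonneg hD.le (by nlinarith : (0:ℝ) ≤ 1 - (α+1/2)^2))]
    have : sSup ((fun u => fs a α u) '' Set.Icc (-1:ℝ) 1) ≤ 0 := csSup_le hne hub
    linarith [hsup ▸ this]
  · -- upper bound α ≤ 1/(2(1-a²))
    by_contra hgt
    push_neg at hgt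
    have he : 1 < 2*(1-a^2)*α := by
      rw [div_lt_iff₀ (by positivity)] at hgt
      linarith [hgt]
    have hlb : ∀ y ∈ (fun u => fs a α u) '' Set.Icc (-1:ℝ) 1, (0:ℝ) ≤ y := by
      rintro y ⟨u, ⟨hu1, hu2⟩, rfl⟩
      have hw0 : (0:ℝ) ≤ 1 - u^2 := by nlinarith
      show (0:ℝ) ≤ fs a α u
      rw [decomp]
      have := mul_nonneg hw0 (by linarith : (0:ℝ) ≤ 2*(1-a^2)*α - 1)
      nlinarith [mul_nonneg hD.le (mul_nonneg (sq_nonneg (1-u^2)) (sq_nonneg (α-1/2)))]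
    have : (0:ℝ) ≤ sInf ((fun u => fs a α u) '' Set.Icc (-1:ℝ) 1) := le_csInf hne hlb
    linarith [hinf ▸ this]

end
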